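/- Let (M, d) be a metric space, Y a type, S' a finite set of labeled points in M × Y with pairwise distinct inputs, x_test ∈ M, y ∈ Y, and b ∈ ℕ. Suppose S' contains at least b+1 points with label different from y, and let r be the (b+1)-st smallest value in the multiset {d(x_test, x_i) : (x_i, y_i) ∈ S', y_i ≠ y}; assume r > 0. Then the supremum, over classifiers h : M → Y with h(x_test) = y making at most b mistakes on S', of the local margin inf{d(x_test, x') : x' ∈ M, h(x') ≠ y}, equals r, and it is attained; equivalently, the minimum local-margin complexity of such a classifier with respect to x_test equals 1/r. -/

import Mathlib

open Classical in
/-- Number of mistakes of classifier `h` on dataset `S`. -/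
noncomputable def mistakes {X Y : Type*} (h : X → Y) (S : Finset (X × Y)) : ℕ :=
  (S.filter fun p => h p.1 ≠ p.2).card

private lemma sorted_countP_lt (l : List ℝ) (hl : l.Pairwise (· ≤ ·)) (i : ℕ) (hi : i < l.length) :
    l.countP (fun a => decide (a < l[i])) ≤ i := by
  have key : ∀ j, ∀ hj : j < l.length, i ≤ j → ¬ (l[j] < l[i]) := fun j hj hij =>
    not_lt.mpr (hl.rel_get_of_le (a := ⟨i, hi⟩) (b := ⟨j, hj⟩) hij)
  have h2 : (l.drop i).countP (fun a => decide (a < l[i])) = 0 := by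
    rw [List.countP_eq_zero]
    intro a ha
    obtain ⟨j, hj, rfl⟩ := List.mem_iff_getElem.mp ha
    rw [List.getElem_drop]
    simp only [decide_eq_true_eq]
    have hj' : i + j < l.length := by
      rw [List.length_drop] at hj; omega
    exact key _ hj' (Nat.le_add_right i j)
  have happ : (l.take i ++ l.drop i).countP (fun a => decide (a < l[i])) =
      (l.take i).countP (fun a => decide (a < l[i])) + (l.drop i).countP (fun a => decide (a < l[i])) :=
    List.countP_append
  rw [List.take_append_drop] at happ
  rw [happ, h2, Nat.add_zero]
  calc (l.take i).countP (fun a => decide (a < l[i])) ≤ (l.take i).length :=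
        List.countP_le_length
    _ ≤ i := by rw [List.length_take]; omega

private lemma sorted_countP_le (l : List ℝ) (hl : l.Pairwise (· ≤ ·)) (i : ℕ) (hi : i < l.length) :
    i + 1 ≤ l.countP (fun a => decide (a ≤ l[i])) := by
  have hlen : (l.take (i + 1)).length = i + 1 := by rw [List.length_take]; omega
  have h1 : (l.take (i + 1)).countP (fun a => decide (a ≤ l[i])) = i + 1 := by
    rw [List.countP_eq_length.mpr ?_, hlen]
    intro a ha
    obtain ⟨j, hj, rfl⟩ := List.mem_iff_getElem.mp ha
    rw [List.getElem_take]
    simp only [decide_eq_true_eq]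
    have hj' : j < l.length := by rw [List.length_take] at hj; omega
    exact hl.rel_get_of_le (a := ⟨j, hj'⟩) (b := ⟨i, hi⟩) (by
      rw [hlen] at hj; exact Nat.le_of_lt_succ hj)
  calc i + 1 = (l.take (i + 1)).countP (fun a => decide (a ≤ l[i])) := h1.symm
    _ ≤ l.countP _ := (List.take_sublist _ _).countP_le

open Classical in
theorem stmt14 {M Y : Type*} [MetricSpace M]
    (S' : Finset (M × Y)) (hinj : ∀ p ∈ S', ∀ q ∈ S', p.1 = q.1 → p = q)
    (xtest : M) (y : Y) (b : ℕ)
    (hcard : b + 1 ≤ (S'.filter fun p => p.2 ≠ y).card)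
    (r : ℝ)
    (hr : r = (Multiset.sort
        (((S'.filter fun p => p.2 ≠ y).val).map fun p => dist xtest p.1) (· ≤ ·)).getD b 0)
    (hrpos : 0 < r) :
    IsGreatest {g : ℝ | ∃ h : M → Y, h xtest = y ∧ mistakes h S' ≤ b ∧
      g = Metric.infDist xtest {x' | h x' ≠ y}} r := by
  set D : Multiset ℝ := ((S'.filter fun p => p.2 ≠ y).val).map fun p => dist xtest p.1 with hD
  set L : List ℝ := Multiset.sort D (· ≤ ·) with hL
  have hLlen : L.length = (S'.filter fun p => p.2 ≠ y).card := by
    rw [hL, Multiset.length_sort, hD, Multiset.card_map]; rfl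
  have hb : b < L.length := by omega
  have hrget : r = L[b] := by rw [hr]; exact List.getD_eq_getElem L 0 hb
  have hsorted : L.Pairwise (· ≤ ·) := Multiset.pairwise_sort _ _
  have hcount : ∀ (p : ℝ → Prop) [DecidablePred p],
      L.countP (fun a => decide (p a)) =
        (S'.filter fun q => q.2 ≠ y ∧ p (dist xtest q.1)).card := by
    intro p _
    have h1 : Multiset.countP p D = L.countP (fun a => decide (p a)) := by
      rw [hL, ← Multiset.coe_countP p (Multiset.sort D (· ≤ ·)), Multiset.sort_eq]
    rw [← h1, hD, Multiset.countP_map, ← Finset.filter_filter]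
    rfl
  have hrmem : ∃ p ∈ S', p.2 ≠ y ∧ dist xtest p.1 = r := by
    have : r ∈ L := hrget ▸ List.getElem_mem hb
    rw [hL, Multiset.mem_sort, hD, Multiset.mem_map] at this
    obtain ⟨q, hq, hdq⟩ := this
    rw [← Finset.mem_def, Finset.mem_filter] at hq
    exact ⟨q, hq.1, hq.2, hdq⟩
  obtain ⟨p₀, hp₀S, hp₀y, hp₀d⟩ := hrmem
  constructor
  · refine ⟨fun x => if dist xtest x < r then y
      else if hx : ∃ p ∈ S', p.1 = x then (Classical.choose hx).2 else p₀.2, ?_, ?_, ?_⟩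
    · simp [dist_self, hrpos]
    · unfold mistakes
      have hsubset : (S'.filter fun p =>
          (if dist xtest p.1 < r then y
            else if hx : ∃ q ∈ S', q.1 = p.1 then (Classical.choose hx).2 else p₀.2) ≠ p.2)
          ⊆ S'.filter fun p => p.2 ≠ y ∧ dist xtest p.1 < r := by
        intro p hp
        rw [Finset.mem_filter] at hp ⊢
        obtain ⟨hpS, hpm⟩ := hp
        refine ⟨hpS, ?_⟩
        by_cases hd : dist xtest p.1 < r
        · rw [if_pos hd] at hpm
          exact ⟨fun h => hpm h.symm, hd⟩
        · exfalso
          rw [if_neg hd] at hpm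
          have hex : ∃ q ∈ S', q.1 = p.1 := ⟨p, hpS, rfl⟩
          rw [dif_pos hex] at hpm
          obtain ⟨hq1, hq2⟩ := Classical.choose_spec hex
          exact hpm (congrArg Prod.snd (hinj _ hq1 _ hpS hq2))
      calc _ ≤ (S'.filter fun p => p.2 ≠ y ∧ dist xtest p.1 < r).card :=
            Finset.card_le_card hsubset
        _ = L.countP (fun a => decide (a < r)) := (hcount (fun a => a < r)).symm
        _ ≤ b := by
            rw [show (fun a => decide (a < r)) = fun a => decide (a < L[b]) by
              funext a; rw [← hrget]]
            exact sorted_countP_lt L hsorted b hb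
    · have hmem : p₀.1 ∈ {x' | (if dist xtest x' < r then y
          else if hx : ∃ q ∈ S', q.1 = x' then (Classical.choose hx).2 else p₀.2) ≠ y} := by
        simp only [Set.mem_setOf_eq]
        rw [if_neg (by rw [hp₀d]; exact lt_irrefl r)]
        have hex : ∃ q ∈ S', q.1 = p₀.1 := ⟨p₀, hp₀S, rfl⟩
        rw [dif_pos hex]
        obtain ⟨hq1, hq2⟩ := Classical.choose_spec hex
        rw [hinj _ hq1 _ hp₀S hq2]
        exact hp₀y
      refine le_antisymm ?_ ?_
      · by_contra hlt
        push_neg at hlt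
        rw [Metric.infDist_lt_iff ⟨p₀.1, hmem⟩] at hlt
        obtain ⟨z, hz, hdz⟩ := hlt
        simp only [Set.mem_setOf_eq] at hz
        rw [if_pos hdz] at hz
        exact hz rfl
      · calc Metric.infDist xtest _ ≤ dist xtest p₀.1 := Metric.infDist_le_dist_of_mem hmem
          _ = r := hp₀d
  · rintro g ⟨h, hhx, hhm, rfl⟩
    set A := S'.filter fun p => p.2 ≠ y ∧ dist xtest p.1 ≤ r with hA
    set B := S'.filter fun p => h p.1 ≠ p.2 with hB
    have hAcard : b + 1 ≤ A.card := by
      rw [hA, ← hcount (fun a => a ≤ r)]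
      rw [show (fun a => decide (a ≤ r)) = fun a => decide (a ≤ L[b]) by
        funext a; rw [← hrget]]
      exact sorted_countP_le L hsorted b hb
    have hBcard : B.card ≤ b := hhm
    have hex : ∃ p ∈ A, p ∉ B := by
      by_contra hc
      push_neg at hc
      have := Finset.card_le_card hc
      omega
    obtain ⟨p, hpA, hpB⟩ := hex
    rw [hA, Finset.mem_filter] at hpA
    obtain ⟨hpS, hpy, hpd⟩ := hpA
    have hpeq : h p.1 = p.2 := by
      by_contra hne
      exact hpB (Finset.mem_filter.mpr ⟨hpS, hne⟩)
    have hpmem : p.1 ∈ {x' | h x' ≠ y} := by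
      simp only [Set.mem_setOf_eq]
      rw [hpeq]; exact hpy
    calc Metric.infDist xtest _ ≤ dist xtest p.1 := Metric.infDist_le_dist_of_mem hpmem
      _ ≤ r := hpd
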